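/- Let V : Δ(Ω) → ℝ be bounded, continuous and concave and satisfy the dynamic programming equation. Then for every p ∈ Δ(Ω), V(p) ≤ γ*(p) := (1−δ)·Σ_{n=0}^∞ δ^n · r̂(φ^{(n)}(p)). (The first-best payoff γ* is an upper bound on the advisor's value.) -/

import Mathlib

open MeasureTheory Set

noncomputable section

variable {Ω : Type*}

/-- The investment region `I = {p ∈ Δ(Ω) : ⟨p,r⟩ ≥ 0}`. -/
def invest [Fintype Ω] (r : Ω → ℝ) : Set (Ω → ℝ) :=
  {p | p ∈ stdSimplex ℝ Ω ∧ 0 ≤ ∑ ω, p ω * r ω}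

/-- The set `S(p)` of splittings at `p`: Borel probability measures on `ℝ^Ω` carried by the
simplex `Δ(Ω)` with barycenter `p`. -/
def Splittings [Fintype Ω] (p : Ω → ℝ) : Set (Measure (Ω → ℝ)) :=
  {μ | IsProbabilityMeasure μ ∧ μ (stdSimplex ℝ Ω) = 1 ∧ ∫ q, q ∂μ = p}

/-- The payoff `(1−δ)·μ(I) + δ·∫ V(φ(q)) dμ(q)` appearing in the dynamic programming
equation. -/
def dppPayoff [Fintype Ω] (r : Ω → ℝ) (δ : ℝ) (φ : (Ω → ℝ) → Ω → ℝ)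
    (V : (Ω → ℝ) → ℝ) (μ : Measure (Ω → ℝ)) : ℝ :=
  (1 - δ) * (μ (invest r)).toReal + δ * ∫ q in stdSimplex ℝ Ω, V (φ q) ∂μ

/-- `V` satisfies the dynamic programming equation
`V(p) = sup_{μ ∈ S(p)} [(1−δ)·μ(I) + δ·∫ V(φ(q)) dμ(q)]` on the simplex. -/
def SatisfiesDPP [Fintype Ω] (r : Ω → ℝ) (δ : ℝ) (φ : (Ω → ℝ) → Ω → ℝ)
    (V : (Ω → ℝ) → ℝ) : Prop :=
  ∀ p ∈ stdSimplex ℝ Ω, V p = sSup (dppPayoff r δ φ V '' Splittings p)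

/-- `r̂(p) = sup_{μ ∈ S(p)} μ(I)`, the best current payoff at belief `p`. -/
def rhat [Fintype Ω] (r : Ω → ℝ) (p : Ω → ℝ) : ℝ :=
  sSup ((fun μ : Measure (Ω → ℝ) => (μ (invest r)).toReal) '' Splittings p)

/-- The Dirac mass at `p` is a splitting of `p`. -/
lemma dirac_mem_splittings [Fintype Ω] {p : Ω → ℝ} (hp : p ∈ stdSimplex ℝ Ω) :
    Measure.dirac p ∈ Splittings p := by
  refine ⟨by infer_instance, Measure.dirac_apply_of_mem hp, ?_⟩
  exact integral_dirac (fun q => q) p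

/-- Any splitting measure assigns at most `1` to any set, in real terms. -/
lemma splitting_meas_le_one [Fintype Ω] {p : Ω → ℝ} {μ : Measure (Ω → ℝ)}
    (hμ : μ ∈ Splittings p) (s : Set (Ω → ℝ)) : (μ s).toReal ≤ 1 := by
  have : IsProbabilityMeasure μ := hμ.1
  have h : μ s ≤ 1 := prob_le_one
  calc (μ s).toReal ≤ ((1 : ENNReal)).toReal := ENNReal.toReal_mono (by simp) h
    _ = 1 := by simp

lemma bddAbove_rhat_set [Fintype Ω] (r : Ω → ℝ) (p : Ω → ℝ) :
    BddAbove ((fun μ : Measure (Ω → ℝ) => (μ (invest r)).toReal) '' Splittings p) := by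
  refine ⟨1, ?_⟩
  rintro x ⟨μ, hμ, rfl⟩
  exact splitting_meas_le_one hμ _

lemma meas_le_rhat [Fintype Ω] (r : Ω → ℝ) {p : Ω → ℝ} {μ : Measure (Ω → ℝ)}
    (hμ : μ ∈ Splittings p) : (μ (invest r)).toReal ≤ rhat r p :=
  le_csSup (bddAbove_rhat_set r p) ⟨μ, hμ, rfl⟩

lemma rhat_nonneg [Fintype Ω] (r : Ω → ℝ) {p : Ω → ℝ} (hp : p ∈ stdSimplex ℝ Ω) :
    0 ≤ rhat r p :=
  le_trans ENNReal.toReal_nonneg (meas_le_rhat r (dirac_mem_splittings hp))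

lemma rhat_le_one [Fintype Ω] (r : Ω → ℝ) (p : Ω → ℝ) : rhat r p ≤ 1 := by
  apply Real.sSup_le _ zero_le_one
  rintro x ⟨μ, hμ, rfl⟩
  exact splitting_meas_le_one hμ _

/-- the first-best payoff `γ*(p) = (1−δ)·Σ_n δ^n r̂(φ^{(n)}(p))` is an upper
bound on any bounded, continuous, concave solution of the dynamic programming equation. -/
theorem value_le_firstBest [Fintype Ω] [Nonempty Ω]
    (r : Ω → ℝ) (δ : ℝ) (hδ : δ ∈ Ico (0 : ℝ) 1)
    (φ : (Ω → ℝ) → Ω → ℝ)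
    (hφmaps : MapsTo φ (stdSimplex ℝ Ω) (stdSimplex ℝ Ω))
    (hφcont : ContinuousOn φ (stdSimplex ℝ Ω))
    (hφaff : ∀ x ∈ stdSimplex ℝ Ω, ∀ y ∈ stdSimplex ℝ Ω, ∀ t ∈ Icc (0 : ℝ) 1,
      φ (t • x + (1 - t) • y) = t • φ x + (1 - t) • φ y)
    (V : (Ω → ℝ) → ℝ)
    (hVb : ∃ C, ∀ p ∈ stdSimplex ℝ Ω, |V p| ≤ C)
    (hVcont : ContinuousOn V (stdSimplex ℝ Ω))
    (hVconc : ConcaveOn ℝ (stdSimplex ℝ Ω) V)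
    (hV : SatisfiesDPP r δ φ V) :
    ∀ p ∈ stdSimplex ℝ Ω,
      V p ≤ (1 - δ) * ∑' n : ℕ, δ ^ n * rhat r (φ^[n] p) := by
  obtain ⟨C, hC⟩ := hVb
  obtain ⟨hδ0, hδ1⟩ := hδ
  set S := stdSimplex ℝ Ω with hS
  have hSclosed : IsClosed S := isClosed_stdSimplex ℝ Ω
  have hSmeas : MeasurableSet S := hSclosed.measurableSet
  -- concavity of V ∘ φ on the simplex
  have hVφconc : ConcaveOn ℝ S (fun q => V (φ q)) := by
    refine ⟨convex_stdSimplex ℝ Ω, ?_⟩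
    intro x hx y hy a b ha hb hab
    have hb' : b = 1 - a := by linarith
    subst hb'
    have key : φ (a • x + (1 - a) • y) = a • φ x + (1 - a) • φ y :=
      hφaff x hx y hy a ⟨ha, by linarith⟩
    show a • V (φ x) + (1 - a) • V (φ y) ≤ V (φ (a • x + (1 - a) • y))
    rw [key]
    exact hVconc.2 (hφmaps hx) (hφmaps hy) ha hb hab
  have hVφcont : ContinuousOn (fun q => V (φ q)) S := hVcont.comp hφcont hφmaps
  -- one-step inequality
  have step : ∀ p ∈ S, V p ≤ (1 - δ) * rhat r p + δ * V (φ p) := by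
    intro p hp
    rw [hV p hp]
    apply csSup_le
    · exact ⟨_, Set.mem_image_of_mem _ (dirac_mem_splittings hp)⟩
    rintro x ⟨μ, hμ, rfl⟩
    have hprob : IsProbabilityMeasure μ := hμ.1
    have hcompl : μ Sᶜ = 0 := by
      have := measure_compl hSmeas (measure_ne_top μ S)
      rw [hμ.2.1] at this
      simpa [measure_univ] using this
    have haemem : ∀ᵐ q ∂μ, q ∈ S := mem_ae_iff.mpr hcompl
    have hrest : μ.restrict S = μ := Measure.restrict_eq_self_of_ae_mem haemem
    -- integrability of the identity
    have hid_int : Integrable (fun q : Ω → ℝ => q) μ := by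
      refine ⟨(measurable_id.aestronglyMeasurable), ?_⟩
      apply HasFiniteIntegral.of_bounded (C := 1)
      filter_upwards [haemem] with q hq
      rw [pi_norm_le_iff_of_nonneg zero_le_one]
      intro i
      have h0 : 0 ≤ q i := hq.1 i
      have h1 : q i ≤ 1 := by
        have := Finset.single_le_sum (f := fun j => q j)
          (fun j _ => hq.1 j) (Finset.mem_univ i)
        rw [hq.2] at this; exact this
      rw [Real.norm_eq_abs, abs_of_nonneg h0]; exact h1
    -- integrability of V ∘ φ
    have hVφ_meas : AEStronglyMeasurable (fun q => V (φ q)) μ := by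
      have := hVφcont.aestronglyMeasurable (μ := μ) hSmeas
      rwa [hrest] at this
    have hVφ_int : Integrable (fun q => V (φ q)) μ := by
      refine ⟨hVφ_meas, ?_⟩
      apply HasFiniteIntegral.of_bounded (C := C)
      filter_upwards [haemem] with q hq
      exact hC _ (hφmaps hq)
    -- Jensen
    have hjensen : (∫ q, V (φ q) ∂μ) ≤ V (φ p) := by
      have := hVφconc.le_map_integral hVφcont hSclosed haemem hid_int hVφ_int
      rwa [hμ.2.2] at this
    have hmeas_le : (μ (invest r)).toReal ≤ rhat r p := meas_le_rhat r hμ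
    have hint_eq : (∫ q in S, V (φ q) ∂μ) = ∫ q, V (φ q) ∂μ := by rw [hrest]
    unfold dppPayoff
    rw [← hS, hint_eq]
    have h1δ : (0:ℝ) ≤ 1 - δ := by linarith
    exact add_le_add (mul_le_mul_of_nonneg_left hmeas_le h1δ)
      (mul_le_mul_of_nonneg_left hjensen hδ0)
  intro p hp
  have hiter : ∀ n : ℕ, φ^[n] p ∈ S := by
    intro n; induction n with
    | zero => simpa using hp
    | succ n ih => rw [Function.iterate_succ_apply']; exact hφmaps ih
  -- finite-horizon bound
  have hfin : ∀ N : ℕ, V p ≤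
      (1 - δ) * ∑ n ∈ Finset.range N, δ ^ n * rhat r (φ^[n] p) + δ ^ N * V (φ^[N] p) := by
    intro N
    induction N with
    | zero => simp
    | succ N ih =>
      have hstep := step (φ^[N] p) (hiter N)
      have hδN : (0:ℝ) ≤ δ ^ N := pow_nonneg hδ0 N
      calc V p ≤ (1 - δ) * ∑ n ∈ Finset.range N, δ ^ n * rhat r (φ^[n] p)
            + δ ^ N * V (φ^[N] p) := ih
        _ ≤ (1 - δ) * ∑ n ∈ Finset.range N, δ ^ n * rhat r (φ^[n] p)
            + δ ^ N * ((1 - δ) * rhat r (φ^[N] p) + δ * V (φ (φ^[N] p))) := by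
            exact add_le_add_right (mul_le_mul_of_nonneg_left hstep hδN) _
        _ = (1 - δ) * ∑ n ∈ Finset.range (N + 1), δ ^ n * rhat r (φ^[n] p)
            + δ ^ (N + 1) * V (φ^[N + 1] p) := by
            rw [Finset.sum_range_succ, Function.iterate_succ_apply']
            ring
  -- summability
  have hsummand_nonneg : ∀ n : ℕ, 0 ≤ δ ^ n * rhat r (φ^[n] p) :=
    fun n => mul_nonneg (pow_nonneg hδ0 n) (rhat_nonneg r (hiter n))
  have hsummable : Summable (fun n : ℕ => δ ^ n * rhat r (φ^[n] p)) := by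
    apply Summable.of_nonneg_of_le hsummand_nonneg
      (fun n => ?_) (summable_geometric_of_lt_one hδ0 hδ1)
    calc δ ^ n * rhat r (φ^[n] p) ≤ δ ^ n * 1 :=
          mul_le_mul_of_nonneg_left (rhat_le_one r _) (pow_nonneg hδ0 n)
      _ = δ ^ n := mul_one _
  -- take the limit
  have htend : Filter.Tendsto (fun N =>
      (1 - δ) * ∑ n ∈ Finset.range N, δ ^ n * rhat r (φ^[n] p) + δ ^ N * V (φ^[N] p))
      Filter.atTop (nhds ((1 - δ) * ∑' n : ℕ, δ ^ n * rhat r (φ^[n] p) + 0)) := by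
    apply Filter.Tendsto.add
    · exact (hsummable.hasSum.tendsto_sum_nat).const_mul _
    · apply squeeze_zero_norm (fun N => ?_)
        (a := fun N => C * δ ^ N)
      · have : Filter.Tendsto (fun N : ℕ => δ ^ N) Filter.atTop (nhds 0) :=
          tendsto_pow_atTop_nhds_zero_of_lt_one hδ0 hδ1
        simpa using this.const_mul C
      · rw [norm_mul, Real.norm_eq_abs, Real.norm_eq_abs,
          abs_of_nonneg (pow_nonneg hδ0 N), mul_comm]
        exact mul_le_mul_of_nonneg_right (hC _ (hiter N)) (pow_nonneg hδ0 N)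
  rw [add_zero] at htend
  exact ge_of_tendsto' htend hfin
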